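/- Let K ⊆ ℝⁿ be a compact convex set with nonempty interior. Then K has no narrow fjords with respect to the Euclidean metric; in fact the condition holds with exponent p = 1: there exists a constant D > 0 such that any two points y,z ∈ K can be joined by a rectifiable path γ : [0,1] → K with γ(0) = y, γ(1) = z whose image lies in the interior of K except possibly for the two endpoints, and whose Euclidean length satisfies ‖y − z‖ ≥ D·ℓ(γ). -/

import Mathlib

open Set Metric

/-- Sums over partitions `0 = t₀ ≤ ⋯ ≤ tₙ = 1` of `[0,1]` for a path `γ` and distance `d`. -/
def partitionSums {M : Type*} (d : M → M → ℝ) (γ : ℝ → M) : Set ℝ :=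
  { L | ∃ (n : ℕ) (t : Fin (n + 1) → ℝ), Monotone t ∧ t 0 = 0 ∧ t (Fin.last n) = 1 ∧
      L = ∑ i : Fin n, d (γ (t i.castSucc)) (γ (t i.succ)) }

/-- Total-variation length of a path `γ : [0,1] → M` with respect to `d`. -/
noncomputable def pathLength {M : Type*} (d : M → M → ℝ) (γ : ℝ → M) : ℝ :=
  sSup (partitionSums d γ)

/-- A path is rectifiable w.r.t. `d` if its total variation is finite. -/
def IsRectifiable {M : Type*} (d : M → M → ℝ) (γ : ℝ → M) : Prop :=
  BddAbove (partitionSums d γ)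

lemma fin_telescope : ∀ {n : ℕ} (t : Fin (n+1) → ℝ),
    ∑ i : Fin n, (t i.succ - t i.castSucc) = t (Fin.last n) - t 0 := by
  intro n
  induction n with
  | zero => intro t; simp
  | succ m ih =>
    intro t
    rw [Fin.sum_univ_castSucc]
    have h := ih (t ∘ Fin.castSucc)
    simp only [Function.comp] at h
    have e1 : ∀ i : Fin m, (i.castSucc).succ = (i.succ).castSucc := by
      intro i; exact Fin.ext rfl
    have h' : ∑ i : Fin m, (t (i.castSucc).succ - t (i.castSucc).castSucc)
        = t (Fin.last m).castSucc - t 0 := by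
      rw [show (0 : Fin (m+2)) = Fin.castSucc 0 by simp, ← h]
      apply Finset.sum_congr rfl; intro i _; rw [e1]
    calc ∑ i : Fin m, (t (i.castSucc).succ - t (i.castSucc).castSucc)
          + (t (Fin.last m).succ - t (Fin.last m).castSucc)
        = (t (Fin.last m).castSucc - t 0) + (t (Fin.last m).succ - t (Fin.last m).castSucc) := by
          rw [h']
      _ = t (Fin.last (m+1)) - t 0 := by
          have : (Fin.last m).succ = Fin.last (m+1) := rfl
          rw [this]; ring

lemma partitionSums_le_of_lip {M : Type*} [PseudoMetricSpace M] {γ : ℝ → M} {L : ℝ}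
    (h : ∀ a ∈ Icc (0:ℝ) 1, ∀ b ∈ Icc (0:ℝ) 1, a ≤ b → dist (γ a) (γ b) ≤ L * (b - a)) :
    ∀ x ∈ partitionSums (fun a b => dist a b) γ, x ≤ L := by
  rintro x ⟨n, t, hmono, h0, h1, rfl⟩
  have hmem : ∀ i : Fin (n+1), t i ∈ Icc (0:ℝ) 1 := by
    intro i
    constructor
    · rw [← h0]; exact hmono (Fin.zero_le i)
    · rw [← h1]; exact hmono (Fin.le_last i)
  have hle : ∀ i : Fin n, t i.castSucc ≤ t i.succ := fun i =>
    hmono (Fin.castSucc_lt_succ : i.castSucc < i.succ).le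
  calc ∑ i : Fin n, dist (γ (t i.castSucc)) (γ (t i.succ))
      ≤ ∑ i : Fin n, L * (t i.succ - t i.castSucc) := by
        apply Finset.sum_le_sum; intro i _
        exact h _ (hmem _) _ (hmem _) (hle i)
    _ = L * ∑ i : Fin n, (t i.succ - t i.castSucc) := by rw [Finset.mul_sum]
    _ = L * 1 := by rw [fin_telescope t, h1, h0]; ring_nf
    _ = L := mul_one L


set_option maxHeartbeats 1000000 in
/-- A compact convex subset of `ℝⁿ` with nonempty interior has no narrow fjords, with
exponent `p = 1`: there is a constant `D > 0` such that any two points `y, z ∈ K` can be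
joined by a rectifiable path in `K` whose image lies in the interior of `K` except possibly
for the two endpoints, of Euclidean length `ℓ(γ)` satisfying `‖y - z‖ ≥ D * ℓ(γ)`. -/
theorem compact_convex_noNarrowFjords_linear
    {n : ℕ} (K : Set (EuclideanSpace ℝ (Fin n)))
    (hK : IsCompact K) (hconv : Convex ℝ K) (hint : (interior K).Nonempty) :
    ∃ D : ℝ, 0 < D ∧ ∀ y ∈ K, ∀ z ∈ K, ∃ γ : ℝ → EuclideanSpace ℝ (Fin n),
      ContinuousOn γ (Icc (0 : ℝ) 1) ∧ γ 0 = y ∧ γ 1 = z ∧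
      (∀ t ∈ Icc (0 : ℝ) 1, γ t ∈ K) ∧
      IsRectifiable (fun a b => dist a b) γ ∧
      (∀ t ∈ Icc (0 : ℝ) 1, γ t ∈ interior K ∨ γ t = y ∨ γ t = z) ∧
      dist y z ≥ D * pathLength (fun a b => dist a b) γ := by
  obtain ⟨c, hc⟩ := hint
  obtain ⟨R, hR⟩ := hK.isBounded.subset_closedBall c
  set M : ℝ := max R 1 with hM
  have hM1 : (1:ℝ) ≤ M := le_max_right _ _
  have hM0 : (0:ℝ) < M := lt_of_lt_of_le one_pos hM1
  have hdistM : ∀ x ∈ K, dist x c ≤ M := fun x hx =>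
    le_trans (mem_closedBall.mp (hR hx)) (le_max_left _ _)
  refine ⟨1/3, by norm_num, ?_⟩
  intro y hy z hz
  set r : ℝ := dist y z with hr
  have hr0 : 0 ≤ r := dist_nonneg
  set s : ℝ := min 1 (r / (4 * M)) with hs
  have hs0 : 0 ≤ s := le_min one_pos.le (by positivity)
  have hs1 : s ≤ 1 := min_le_left _ _
  have hsM : s * M ≤ r / 4 := by
    have : s ≤ r / (4 * M) := min_le_right _ _
    calc s * M ≤ (r / (4 * M)) * M := by nlinarith
      _ = r / 4 := by field_simp
  set σ : ℝ → EuclideanSpace ℝ (Fin n) := fun t => (1 - t) • y + t • z with hσ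
  set lam : ℝ → ℝ := fun t => s * t * (1 - t) with hlam
  set γ : ℝ → EuclideanSpace ℝ (Fin n) := fun t => (1 - lam t) • σ t + lam t • c with hγ
  have hσK : ∀ t ∈ Icc (0:ℝ) 1, σ t ∈ K := fun t ht =>
    hconv hy hz (by linarith [ht.2]) ht.1 (by ring)
  have hlam01 : ∀ t ∈ Icc (0:ℝ) 1, 0 ≤ lam t ∧ lam t ≤ 1 := by
    intro t ht
    obtain ⟨h0, h1⟩ := ht
    constructor
    · simp only [hlam]
      nlinarith [mul_nonneg (mul_nonneg hs0 h0) (by linarith : (0:ℝ) ≤ 1 - t)]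
    · simp only [hlam]
      nlinarith [mul_nonneg h0 (by linarith : (0:ℝ) ≤ 1 - t), sq_nonneg (t - 1/2)]
  have hγ0 : γ 0 = y := by simp [hγ, hlam, hσ]
  have hγ1 : γ 1 = z := by simp [hγ, hlam, hσ]
  -- Lipschitz-type bound
  set L : ℝ := 2 * r + s * M with hL
  have hlip : ∀ a ∈ Icc (0:ℝ) 1, ∀ b ∈ Icc (0:ℝ) 1, a ≤ b →
      dist (γ a) (γ b) ≤ L * (b - a) := by
    intro a ha b hb hab
    have hdiff : γ b - γ a = (b - a) • (z - y) + (lam b - lam a) • (c - σ b)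
        + lam a • ((a - b) • (z - y)) := by
      simp only [hγ, hσ]
      module
    have h1 : ‖(b - a) • (z - y)‖ ≤ r * (b - a) := by
      rw [norm_smul, Real.norm_eq_abs, abs_of_nonneg (by linarith)]
      have : ‖z - y‖ = r := by rw [hr, dist_comm, dist_eq_norm]
      rw [this]; exact le_of_eq (by ring)
    have hlamdiff : |lam b - lam a| ≤ s * (b - a) := by
      have : lam b - lam a = s * (b - a) * (1 - a - b) := by simp only [hlam]; ring
      have hba : (0:ℝ) ≤ s * (b - a) := mul_nonneg hs0 (by linarith)
      have h1ab : |1 - a - b| ≤ 1 := by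
        rw [abs_le]
        exact ⟨by linarith [ha.2, hb.2], by linarith [ha.1, hb.1]⟩
      rw [this, abs_mul, abs_of_nonneg hba]
      nlinarith [abs_nonneg (1 - a - b)]
    have h2 : ‖(lam b - lam a) • (c - σ b)‖ ≤ s * (b - a) * M := by
      rw [norm_smul, Real.norm_eq_abs]
      have hcb : ‖c - σ b‖ ≤ M := by
        rw [← dist_eq_norm, dist_comm]; exact hdistM _ (hσK b hb)
      calc |lam b - lam a| * ‖c - σ b‖ ≤ (s * (b - a)) * M := by
            apply mul_le_mul hlamdiff hcb (norm_nonneg _)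
            exact mul_nonneg hs0 (by linarith)
        _ = s * (b - a) * M := by ring
    have h3 : ‖lam a • ((a - b) • (z - y))‖ ≤ r * (b - a) := by
      rw [norm_smul, norm_smul, Real.norm_eq_abs, Real.norm_eq_abs,
        abs_of_nonneg (hlam01 a ha).1, abs_of_nonpos (by linarith : a - b ≤ 0)]
      have hzy : ‖z - y‖ = r := by rw [hr, dist_comm, dist_eq_norm]
      rw [hzy]
      nlinarith [mul_le_mul_of_nonneg_right (hlam01 a ha).2
        (mul_nonneg (sub_nonneg.mpr hab) hr0)]
    calc dist (γ a) (γ b) = ‖γ b - γ a‖ := by rw [dist_comm, dist_eq_norm]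
      _ ≤ ‖(b - a) • (z - y)‖ + ‖(lam b - lam a) • (c - σ b)‖
          + ‖lam a • ((a - b) • (z - y))‖ := by
            rw [hdiff]; exact norm_add₃_le
      _ ≤ r * (b - a) + s * (b - a) * M + r * (b - a) := by linarith
      _ = L * (b - a) := by rw [hL]; ring
  have hub := partitionSums_le_of_lip hlip
  have hL3r : L ≤ 3 * r := by rw [hL]; linarith
  have hL0 : 0 ≤ L := by rw [hL]; positivity
  have hpl : pathLength (fun a b => dist a b) γ ≤ L := Real.sSup_le hub hL0
  refine ⟨γ, ?_, hγ0, hγ1, ?_, ⟨L, fun x hx => hub x hx⟩, ?_, ?_⟩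
  · apply Continuous.continuousOn
    simp only [hγ, hσ, hlam]
    fun_prop
  · intro t ht
    exact hconv (hσK t ht) (interior_subset hc)
      (by linarith [(hlam01 t ht).2]) (hlam01 t ht).1 (by ring)
  · intro t ht
    rcases eq_or_lt_of_le ht.1 with h0 | h0
    · right; left; rw [← h0]; exact hγ0
    rcases eq_or_lt_of_le ht.2 with h1 | h1
    · right; right; rw [h1]; exact hγ1
    by_cases hrz : r = 0
    · right; left
      have hyz : y = z := by rwa [← dist_eq_zero, ← hr]
      have hs' : s = 0 := by rw [hs, hrz]; simp
      simp [hγ, hlam, hσ, hs', ← hyz]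
      module
    · left
      have hrpos : 0 < r := lt_of_le_of_ne hr0 (Ne.symm hrz)
      have hspos : 0 < s := lt_min one_pos (by positivity)
      have hlampos : 0 < lam t := by
        simp only [hlam]; exact mul_pos (mul_pos hspos h0) (by linarith)
      exact hconv.combo_self_interior_mem_interior (hσK t ht) hc
        (by linarith [(hlam01 t ht).2]) hlampos (by ring)
  · calc (1/3) * pathLength (fun a b => dist a b) γ ≤ (1/3) * L := by linarith
      _ ≤ (1/3) * (3 * r) := by linarith
      _ = r := by ring
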